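/- Let G = K_1 ∨ (C_{k_1} ∪ ⋯ ∪ C_{k_t} ∪ qK_2 ∪ sK_1) and G' = K_1 ∨ (C_{k'_1} ∪ ⋯ ∪ C_{k'_z} ∪ qK_2 ∪ sK_1) with t, z, q, s ≥ 1, k_i ≥ 3 for 1 ≤ i ≤ t and k'_j ≥ 3 for 1 ≤ j ≤ z. If G and G' have the same order n, then χ_1(G) = χ_1(G'); moreover, this common value is the largest root of p_{n,q,s}(ρ) = ρ^4 − (n+8)ρ^3 + (8n+15)ρ^2 + (4q+4s−19n+4)ρ + (12n−4q−12s−12). In other words, for fixed order n, the largest signless Laplacian eigenvalue of such a cone depends only on q and s, and not on the number or lengths of the cycles. -/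

import Mathlib

open SimpleGraph Finset

namespace Paper

/-- The cone `K₁ ∨ G`: a new apex vertex (`none`) joined to every vertex of `G`. -/
def cone {V : Type*} (G : SimpleGraph V) : SimpleGraph (Option V) where
  Adj x y :=
    match x, y with
    | none, none => False
    | none, some _ => True
    | some _, none => True
    | some a, some b => G.Adj a b
  symm := by
    constructor
    rintro (_ | a) (_ | b) h
    · exact h
    · exact trivial
    · exact trivial
    · exact G.adj_symm h
  loopless := by
    constructor
    rintro (_ | a) h
    · exact h
    · exact G.irrefl h

/-- Disjoint union of an indexed family of graphs. -/
def sigmaGraph {ι : Type*} {V : ι → Type*} (G : ∀ i, SimpleGraph (V i)) :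
    SimpleGraph (Σ i, V i) where
  Adj x y := ∃ (i : ι) (u v : V i), x = ⟨i, u⟩ ∧ y = ⟨i, v⟩ ∧ (G i).Adj u v
  symm := by
    constructor
    rintro x y ⟨i, u, v, rfl, rfl, h⟩
    exact ⟨i, v, u, rfl, rfl, (G i).adj_symm h⟩
  loopless := by
    constructor
    rintro x ⟨i, u, v, rfl, h2, h⟩
    injection h2 with h3 h4
    subst h4
    exact (G i).irrefl h

/-- `q` disjoint copies of `K₂`. -/
def K2s (q : ℕ) : SimpleGraph (Σ _ : Fin q, Fin 2) :=
  sigmaGraph fun _ => (⊤ : SimpleGraph (Fin 2))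

/-- The signless Laplacian matrix `Q(G) = D(G) + A(G)`. -/
noncomputable def QMatrix {V : Type*} [Fintype V] (G : SimpleGraph V) : Matrix V V ℝ :=
  letI := Classical.decEq V
  letI := Classical.decRel G.Adj
  Matrix.diagonal (fun v => (G.degree v : ℝ)) + G.adjMatrix ℝ

/-- The signless Laplacian spectrum, as the multiset of roots of the characteristic
polynomial of `Q(G)` (with multiplicity). -/
noncomputable def Qspectrum {V : Type*} [Fintype V] (G : SimpleGraph V) : Multiset ℝ :=
  letI := Classical.decEq V
  (QMatrix G).charpoly.roots

/-- Multiplicity of `ρ` as a signless Laplacian eigenvalue of `G`. -/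
noncomputable def Qmult {V : Type*} [Fintype V] (G : SimpleGraph V) (ρ : ℝ) : ℕ :=
  (Qspectrum G).count ρ

/-- The `i`-th largest signless Laplacian eigenvalue (1-indexed), i.e. `χ_i(G)`. -/
noncomputable def Qeig {V : Type*} [Fintype V] (G : SimpleGraph V) (i : ℕ) : ℝ :=
  (((Qspectrum G).sort (· ≤ ·)).reverse).getD (i - 1) 0

/-- `G` is determined by its signless Laplacian spectrum. -/
def IsDQS {V : Type*} [Fintype V] (G : SimpleGraph V) : Prop :=
  ∀ (W : Type) [Fintype W] (F : SimpleGraph W),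
    Qspectrum F = Qspectrum G → Nonempty (F ≃g G)

/-- The number of subgraphs of `G` isomorphic to `H`. -/
noncomputable def subgraphCount {V W : Type*} (G : SimpleGraph V) (H : SimpleGraph W) : ℕ :=
  Nat.card {H' : G.Subgraph // Nonempty (H'.coe ≃g H)}

/-- The number of triangle subgraphs of `G` containing a vertex `v`. -/
noncomputable def triangleCountAt {V : Type*} (G : SimpleGraph V) (v : V) : ℕ :=
  Nat.card {H' : G.Subgraph //
    v ∈ H'.verts ∧ Nonempty (H'.coe ≃g (⊤ : SimpleGraph (Fin 3)))}

/-- Vertex degree (with classical decidability). -/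
noncomputable def deg {V : Type*} [Fintype V] (G : SimpleGraph V) (v : V) : ℕ :=
  letI := Classical.decRel G.Adj
  G.degree v

/-- The multiset of vertex degrees of `G`. -/
noncomputable def degreeMultiset {V : Type*} [Fintype V] (G : SimpleGraph V) : Multiset ℕ :=
  (Finset.univ : Finset V).val.map fun v => deg G v

/-- The maximum vertex degree of `G`. -/
noncomputable def maxDeg {V : Type*} [Fintype V] (G : SimpleGraph V) : ℕ :=
  letI := Classical.decRel G.Adj
  G.maxDegree

/-- `S_r(G) = trace(A(G)^r)`, the `r`-th spectral moment. -/
noncomputable def Smoment {V : Type*} [Fintype V] (G : SimpleGraph V) (r : ℕ) : ℝ :=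
  letI := Classical.decEq V
  letI := Classical.decRel G.Adj
  ((G.adjMatrix ℝ) ^ r).trace

/-- `T_r(G) = trace(Q(G)^r)`, the `r`-th signless Laplacian spectral moment. -/
noncomputable def Tmoment {V : Type*} [Fintype V] (G : SimpleGraph V) (r : ℕ) : ℝ :=
  letI := Classical.decEq V
  ((QMatrix G) ^ r).trace

/-- `∑_{uv ∈ E(G)} d_G(u) d_G(v)`. -/
noncomputable def edgeDegSum {V : Type*} [Fintype V] (G : SimpleGraph V) : ℕ :=
  letI := Classical.decEq V
  letI := Classical.decRel G.Adj
  ∑ e ∈ G.edgeFinset,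
    Sym2.lift ⟨fun u v => G.degree u * G.degree v, fun _ _ => Nat.mul_comm _ _⟩ e

/-- The coalescence of `G` at `v` with the apex of `K₁ ∨ r K₂`: add `2r` new vertices
`a_i, b_i` and edges `a_i b_i`, `v a_i`, `v b_i`. -/
def coalescenceK2s {V : Type*} (G : SimpleGraph V) (v : V) (r : ℕ) :
    SimpleGraph (V ⊕ (Fin r × Fin 2)) where
  Adj x y :=
    match x, y with
    | Sum.inl a, Sum.inl b => G.Adj a b
    | Sum.inl a, Sum.inr _ => a = v
    | Sum.inr _, Sum.inl b => b = v
    | Sum.inr p, Sum.inr p' => p.1 = p'.1 ∧ p.2 ≠ p'.2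
  symm := by
    constructor
    rintro (a | p) (b | p') h
    · exact G.adj_symm h
    · exact h
    · exact h
    · exact ⟨h.1.symm, h.2.symm⟩
  loopless := by
    constructor
    rintro (a | p) h
    · exact G.irrefl h
    · exact h.2 rfl


/-- `K₁ ∨ (C_{k 0} ∪ ⋯ ∪ C_{k (t-1)} ∪ q K₂ ∪ s K₁)`. -/
def coneCycles {t : ℕ} (k : Fin t → ℕ) (q s : ℕ) :
    SimpleGraph (Option ((Σ i, Fin (k i)) ⊕ ((Σ _ : Fin q, Fin 2) ⊕ Fin s))) :=
  cone ((sigmaGraph fun i => cycleGraph (k i)) ⊕g (K2s q ⊕g (⊥ : SimpleGraph (Fin s))))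

/-- `K₁ ∨ (C_k ∪ q K₂ ∪ s K₁)`. -/
def coneOneCycle (k q s : ℕ) :
    SimpleGraph (Option (Fin k ⊕ ((Σ _ : Fin q, Fin 2) ⊕ Fin s))) :=
  cone (cycleGraph k ⊕g (K2s q ⊕g (⊥ : SimpleGraph (Fin s))))

/-- `K₁ ∨ (C₄ ∪ P_{k-3} ∪ P₃ ∪ (q-2) K₂ ∪ s K₁)`. -/
def coneAlt (k q s : ℕ) :
    SimpleGraph (Option (Fin 4 ⊕ (Fin (k - 3) ⊕ (Fin 3 ⊕ ((Σ _ : Fin (q - 2), Fin 2) ⊕ Fin s))))) :=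
  cone (cycleGraph 4 ⊕g (pathGraph (k - 3) ⊕g (pathGraph 3 ⊕g
    (K2s (q - 2) ⊕g (⊥ : SimpleGraph (Fin s))))))

/-- `K₁ ∨ (C₃ ∪ C_{k 0} ∪ ⋯ ∪ C_{k (t'-1)} ∪ q K₂ ∪ s K₁)`. -/
def coneC3Cycles {t' : ℕ} (k : Fin t' → ℕ) (q s : ℕ) :
    SimpleGraph (Option (Fin 3 ⊕ ((Σ i, Fin (k i)) ⊕ ((Σ _ : Fin q, Fin 2) ⊕ Fin s)))) :=
  cone (cycleGraph 3 ⊕g ((sigmaGraph fun i => cycleGraph (k i)) ⊕g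
    (K2s q ⊕g (⊥ : SimpleGraph (Fin s)))))

/-- `K₁ ∨ (K_{1,3} ∪ C_{k 0} ∪ ⋯ ∪ C_{k (t'-1)} ∪ q K₂ ∪ s' K₁)`. -/
def coneStar {t' : ℕ} (k : Fin t' → ℕ) (q s' : ℕ) :
    SimpleGraph (Option ((Fin 1 ⊕ Fin 3) ⊕ ((Σ i, Fin (k i)) ⊕ ((Σ _ : Fin q, Fin 2) ⊕ Fin s')))) :=
  cone (completeBipartiteGraph (Fin 1) (Fin 3) ⊕g ((sigmaGraph fun i => cycleGraph (k i)) ⊕g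
    (K2s q ⊕g (⊥ : SimpleGraph (Fin s')))))

/-- `K₁ ∨ (P_{l 0} ∪ ⋯ ∪ P_{l (q-1)} ∪ s K₁)`. -/
def conePaths {q : ℕ} (l : Fin q → ℕ) (s : ℕ) :
    SimpleGraph (Option ((Σ i, Fin (l i)) ⊕ Fin s)) :=
  cone ((sigmaGraph fun i => pathGraph (l i)) ⊕g (⊥ : SimpleGraph (Fin s)))

/-- `K₁ ∨ (C_{k 0} ∪ ⋯ ∪ C_{k (z-1)} ∪ P_{l 0} ∪ ⋯ ∪ P_{l (q-1)} ∪ s K₁)`. -/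
def coneCyclesPaths {z q : ℕ} (k : Fin z → ℕ) (l : Fin q → ℕ) (s : ℕ) :
    SimpleGraph (Option ((Σ i, Fin (k i)) ⊕ ((Σ i, Fin (l i)) ⊕ Fin s))) :=
  cone ((sigmaGraph fun i => cycleGraph (k i)) ⊕g
    ((sigmaGraph fun i => pathGraph (l i)) ⊕g (⊥ : SimpleGraph (Fin s))))

/-- The quartic polynomial `p_{n,q,s}` from the paper. -/
noncomputable def quartic (n q s : ℕ) (x : ℝ) : ℝ :=
  x ^ 4 - ((n : ℝ) + 8) * x ^ 3 + (8 * (n : ℝ) + 15) * x ^ 2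
    + (4 * (q : ℝ) + 4 * (s : ℝ) - 19 * (n : ℝ) + 4) * x
    + (12 * (n : ℝ) - 4 * (q : ℝ) - 12 * (s : ℝ) - 12)

/-- The multiset `{3 + 2 cos (2jπ/k_i) : 1 ≤ j ≤ k_i - 1, 1 ≤ i ≤ t}`. -/
noncomputable def cycleEigs {t : ℕ} (k : Fin t → ℕ) : Multiset ℝ :=
  ∑ i : Fin t, (Multiset.range (k i - 1)).map
    (fun j => 3 + 2 * Real.cos (2 * ((j : ℝ) + 1) * Real.pi / (k i : ℝ)))


section Spectral
open Matrix Polynomial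
set_option linter.unusedSectionVars false



variable {m : Type*} [Fintype m] [DecidableEq m] [Nonempty m]

noncomputable def maxEig (M : Matrix m m ℝ) (hM : M.IsHermitian) : ℝ :=
  Finset.univ.sup' Finset.univ_nonempty hM.eigenvalues

lemma rayleigh_le (M : Matrix m m ℝ) (hM : M.IsHermitian) (x : m → ℝ) :
    x ⬝ᵥ (M *ᵥ x) ≤ maxEig M hM * (x ⬝ᵥ x) := by
  classical
  set U : Matrix m m ℝ := (hM.eigenvectorUnitary : Matrix m m ℝ) with hU
  have hmem := (Unitary.mem_iff.mp hM.eigenvectorUnitary.2)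
  have hUs : star U * U = 1 := hmem.1
  have hUss : U * star U = 1 := hmem.2
  have hspec : M = U * diagonal (RCLike.ofReal ∘ hM.eigenvalues) * star U :=
    hM.spectral_theorem
  have hstar : star U = Uᵀ := by
    rw [Matrix.star_eq_conjTranspose, Matrix.conjTranspose_eq_transpose_of_trivial]
  set D := diagonal (RCLike.ofReal (K := ℝ) ∘ hM.eigenvalues) with hD
  set y : m → ℝ := Uᵀ *ᵥ x with hy
  have hxU : x ᵥ* U = y := by
    rw [hy, ← vecMul_transpose, transpose_transpose]
  have h1 : x ⬝ᵥ (M *ᵥ x) = y ⬝ᵥ (D *ᵥ y) := by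
    rw [hspec, hstar, ← mulVec_mulVec, ← mulVec_mulVec, dotProduct_mulVec x U, hxU]
  have h2 : x ⬝ᵥ x = y ⬝ᵥ y := by
    have : y ⬝ᵥ y = (x ᵥ* U) ⬝ᵥ (Uᵀ *ᵥ x) := by rw [hxU, hy]
    rw [this, ← dotProduct_mulVec, mulVec_mulVec, ← hstar, hUss, one_mulVec]
  rw [h1, h2]
  have h3 : ∀ i, y i * (D *ᵥ y) i ≤ maxEig M hM * (y i * y i) := by
    intro i
    have : (D *ᵥ y) i = hM.eigenvalues i * y i := by
      simp [hD, mulVec_diagonal]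
    rw [this]
    have hle : hM.eigenvalues i ≤ maxEig M hM :=
      Finset.le_sup' _ (Finset.mem_univ i)
    nlinarith [sq_nonneg (y i)]
  calc y ⬝ᵥ (D *ᵥ y) = ∑ i, y i * (D *ᵥ y) i := rfl
    _ ≤ ∑ i, maxEig M hM * (y i * y i) := Finset.sum_le_sum fun i _ => h3 i
    _ = maxEig M hM * (y ⬝ᵥ y) := by rw [dotProduct, Finset.mul_sum]



variable {m : Type*} [Fintype m] [DecidableEq m] [Nonempty m]

lemma le_maxEig (M : Matrix m m ℝ) (hM : M.IsHermitian) {θ : ℝ} {v : m → ℝ}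
    (hv : v ≠ 0) (h : M *ᵥ v = θ • v) : θ ≤ maxEig M hM := by
  have hvv : 0 < v ⬝ᵥ v := by
    rcases Function.ne_iff.mp hv with ⟨j, hj⟩
    apply Finset.sum_pos' (fun i _ => mul_self_nonneg _)
    exact ⟨j, Finset.mem_univ j, mul_self_pos.mpr hj⟩
  have h1 : v ⬝ᵥ (M *ᵥ v) = θ * (v ⬝ᵥ v) := by
    rw [h, dotProduct_smul, smul_eq_mul]
  have := rayleigh_le M hM v
  rw [h1] at this
  exact le_of_mul_le_mul_right (by linarith) hvv

lemma exists_nonneg_eigenvector (M : Matrix m m ℝ) (hM : M.IsHermitian)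
    (hnn : ∀ i j, 0 ≤ M i j) :
    ∃ v : m → ℝ, v ≠ 0 ∧ (∀ i, 0 ≤ v i) ∧ M *ᵥ v = maxEig M hM • v := by
  classical
  obtain ⟨i₀, -, hi₀⟩ := Finset.exists_mem_eq_sup' (Finset.univ_nonempty (α := m))
    hM.eigenvalues
  have hi₀' : maxEig M hM = hM.eigenvalues i₀ := hi₀
  set w : m → ℝ := ⇑(hM.eigenvectorBasis i₀) with hw
  have hwe : M *ᵥ w = maxEig M hM • w := by
    rw [hi₀']; exact hM.mulVec_eigenvectorBasis i₀
  have hwne : w ≠ 0 := by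
    have := hM.eigenvectorBasis.orthonormal.ne_zero i₀
    intro hc
    apply this
    ext j
    exact congrFun hc j
  set v : m → ℝ := fun i => |w i| with hv
  have hvne : v ≠ 0 := by
    intro hc
    apply hwne
    ext j
    have := congrFun hc j
    simpa [hv, abs_eq_zero] using this
  have hvv : v ⬝ᵥ v = w ⬝ᵥ w := by
    simp [dotProduct, hv, abs_mul_abs_self]
  have hwMw : w ⬝ᵥ (M *ᵥ w) = maxEig M hM * (w ⬝ᵥ w) := by
    rw [hwe, dotProduct_smul, smul_eq_mul]
  have hvMv : maxEig M hM * (w ⬝ᵥ w) ≤ v ⬝ᵥ (M *ᵥ v) := by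
    rw [← hwMw]
    simp only [dotProduct, mulVec, Finset.mul_sum]
    apply Finset.sum_le_sum
    intro i _
    apply Finset.sum_le_sum
    intro j _
    have h1 : w i * (M i j * w j) ≤ |w i| * (M i j * |w j|) := by
      have h2 : w i * (M i j * w j) ≤ |w i * (M i j * w j)| := le_abs_self _
      have h3 : |w i * (M i j * w j)| = |w i| * (M i j * |w j|) := by
        rw [abs_mul, abs_mul, abs_of_nonneg (hnn i j)]
      linarith
    simpa [hv] using h1
  set S : Matrix m m ℝ := maxEig M hM • (1 : Matrix m m ℝ) - M with hS
  have hSmul : ∀ x : m → ℝ, S *ᵥ x = maxEig M hM • x - M *ᵥ x := by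
    intro x
    rw [hS, sub_mulVec, smul_mulVec, one_mulVec]
  have hSpsd : S.PosSemidef := by
    rw [Matrix.posSemidef_iff_dotProduct_mulVec]
    constructor
    · have hMt : Mᵀ = M := by
        rw [← Matrix.conjTranspose_eq_transpose_of_trivial]; exact hM
      unfold Matrix.IsHermitian
      rw [hS]
      simp [conjTranspose_sub, conjTranspose_smul, hM.eq, hMt]
    · intro x
      have := rayleigh_le M hM x
      rw [hSmul, star_trivial, dotProduct_sub, dotProduct_smul, smul_eq_mul]
      linarith
  have hzero : star v ⬝ᵥ (S *ᵥ v) = 0 := by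
    have hge := hSpsd.dotProduct_mulVec_nonneg v
    have hle : star v ⬝ᵥ (S *ᵥ v) ≤ 0 := by
      rw [hSmul, star_trivial, dotProduct_sub, dotProduct_smul, smul_eq_mul, hvv]
      linarith
    linarith
  have hSv : S *ᵥ v = 0 := (hSpsd.dotProduct_mulVec_zero_iff v).mp hzero
  refine ⟨v, hvne, fun i => abs_nonneg _, ?_⟩
  have h0 := hSmul v
  rw [hSv] at h0
  exact (sub_eq_zero.mp h0.symm).symm

lemma maxEig_eq_of_pos_eigenvector (M : Matrix m m ℝ) (hM : M.IsHermitian)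
    (hnn : ∀ i j, 0 ≤ M i j) {θ : ℝ} {u : m → ℝ}
    (hu : ∀ i, 0 < u i) (h : M *ᵥ u = θ • u) : θ = maxEig M hM := by
  obtain ⟨v, hvne, hvnn, hve⟩ := exists_nonneg_eigenvector M hM hnn
  have hMt : Mᵀ = M := by
    rw [← Matrix.conjTranspose_eq_transpose_of_trivial]; exact hM
  have hsymm : u ⬝ᵥ (M *ᵥ v) = v ⬝ᵥ (M *ᵥ u) := by
    rw [dotProduct_mulVec, ← hMt, vecMul_transpose, dotProduct_comm, hMt]
  have h1 : u ⬝ᵥ (M *ᵥ v) = maxEig M hM * (u ⬝ᵥ v) := by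
    rw [hve, dotProduct_smul, smul_eq_mul]
  have h2 : v ⬝ᵥ (M *ᵥ u) = θ * (u ⬝ᵥ v) := by
    rw [h, dotProduct_smul, smul_eq_mul, dotProduct_comm]
  have h3 : 0 < u ⬝ᵥ v := by
    rcases Function.ne_iff.mp hvne with ⟨j, hj⟩
    apply Finset.sum_pos' (fun i _ => mul_nonneg (hu i).le (hvnn i))
    refine ⟨j, Finset.mem_univ j, mul_pos (hu j) ?_⟩
    exact lt_of_le_of_ne (hvnn j) (Ne.symm hj)
  have : maxEig M hM * (u ⬝ᵥ v) = θ * (u ⬝ᵥ v) := by rw [← h1, hsymm, h2]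
  exact (mul_right_cancel₀ (ne_of_gt h3) this.symm)

lemma eval_charpoly (M : Matrix m m ℝ) (x : ℝ) :
    M.charpoly.eval x = (x • (1 : Matrix m m ℝ) - M).det := by
  rw [Matrix.charpoly, ← Polynomial.coe_evalRingHom, RingHom.map_det]
  congr 1
  ext i j
  by_cases h : i = j
  · subst h
    simp [Matrix.charmatrix_apply_eq, Matrix.one_apply, Matrix.sub_apply,
      Matrix.smul_apply]
  · simp [Matrix.charmatrix_apply_ne _ _ _ h, Matrix.one_apply_ne h, Matrix.sub_apply,
      Matrix.smul_apply]

lemma det_eq_zero_iff_eigen (M : Matrix m m ℝ) (x : ℝ) :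
    (x • (1 : Matrix m m ℝ) - M).det = 0 ↔ ∃ v : m → ℝ, v ≠ 0 ∧ M *ᵥ v = x • v := by
  rw [← Matrix.exists_mulVec_eq_zero_iff]
  constructor
  · rintro ⟨v, hv, hv0⟩
    refine ⟨v, hv, ?_⟩
    rw [sub_mulVec, smul_mulVec, one_mulVec] at hv0
    exact (sub_eq_zero.mp hv0).symm
  · rintro ⟨v, hv, hv0⟩
    refine ⟨v, hv, ?_⟩
    rw [sub_mulVec, smul_mulVec, one_mulVec, hv0, sub_self]

lemma mem_roots_charpoly_iff (M : Matrix m m ℝ) (x : ℝ) :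
    x ∈ M.charpoly.roots ↔ ∃ v : m → ℝ, v ≠ 0 ∧ M *ᵥ v = x • v := by
  rw [Polynomial.mem_roots (M.charpoly_monic.ne_zero), Polynomial.IsRoot.def,
    eval_charpoly, det_eq_zero_iff_eigen]

/-- The largest-root extraction used in `Qeig`. -/
lemma getD_reverse_sort (μ : Multiset ℝ) {x : ℝ} (hx : x ∈ μ) (hmax : ∀ y ∈ μ, y ≤ x) :
    ((μ.sort (· ≤ ·)).reverse).getD 0 0 = x := by
  have hne : μ.sort (· ≤ ·) ≠ [] := by
    intro h
    have := Multiset.mem_sort (· ≤ ·) (s := μ) (a := x) |>.mpr hx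
    rw [h] at this
    simp at this
  obtain ⟨L, y, heq⟩ := List.eq_nil_or_concat (μ.sort (· ≤ ·)) |>.resolve_left hne
  have hymem : y ∈ μ := by
    rw [← Multiset.mem_sort (· ≤ ·), heq, List.concat_eq_append]
    simp
  have hxmem : x ∈ L ++ [y] := by
    rw [← List.concat_eq_append, ← heq, Multiset.mem_sort]
    exact hx
  have hsorted : List.Pairwise (· ≤ ·) (L ++ [y]) := by
    rw [← List.concat_eq_append, ← heq]
    exact Multiset.pairwise_sort _ _
  have hxy : x ≤ y := by
    rcases List.mem_append.mp hxmem with h | h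
    · exact (List.pairwise_append.mp hsorted).2.2 x h y (List.mem_singleton_self y)
    · simp at h
      exact h.le
  have hyx : y = x := le_antisymm (hmax y hymem) hxy
  rw [heq, List.concat_eq_append, List.reverse_append]
  simp [hyx]


end Spectral


section GraphSide
open Matrix Polynomial SimpleGraph

set_option linter.unusedSectionVars false
set_option maxHeartbeats 1000000

-- cone adjacency lemmas
@[simp] lemma cone_adj_none_none {V : Type*} (G : SimpleGraph V) :
    ¬ (cone G).Adj none none := fun h => h

@[simp] lemma cone_adj_none_some {V : Type*} (G : SimpleGraph V) (v : V) :
    (cone G).Adj none (some v) := trivial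

@[simp] lemma cone_adj_some_none {V : Type*} (G : SimpleGraph V) (v : V) :
    (cone G).Adj (some v) none := trivial

@[simp] lemma cone_adj_some_some {V : Type*} (G : SimpleGraph V) (u v : V) :
    (cone G).Adj (some u) (some v) ↔ G.Adj u v := Iff.rfl

@[simp] lemma sigmaGraph_adj_same {ι : Type*} {V : ι → Type*} (G : ∀ i, SimpleGraph (V i))
    (i : ι) (u v : V i) : (sigmaGraph G).Adj ⟨i, u⟩ ⟨i, v⟩ ↔ (G i).Adj u v := by
  constructor
  · rintro ⟨j, x, y, h1, h2, hadj⟩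
    injection h1 with hj hx
    subst hj
    injection h2 with hj2 hy
    rw [eq_of_heq hx, hy]
    exact hadj
  · intro h
    exact ⟨i, u, v, rfl, rfl, h⟩

lemma sigmaGraph_adj_ne {ι : Type*} {V : ι → Type*} (G : ∀ i, SimpleGraph (V i))
    {i j : ι} (hij : i ≠ j) (u : V i) (v : V j) :
    ¬ (sigmaGraph G).Adj ⟨i, u⟩ ⟨j, v⟩ := by
  rintro ⟨l, x, y, h1, h2, -⟩
  injection h1 with hl _
  injection h2 with hl2 _
  exact hij (hl.trans hl2.symm)

lemma QMatrix_eq {V : Type*} [Fintype V] (G : SimpleGraph V)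
    [DecidableEq V] [DecidableRel G.Adj] :
    QMatrix G = Matrix.diagonal (fun v => (G.degree v : ℝ)) + G.adjMatrix ℝ := by
  unfold QMatrix
  congr!

lemma QMatrix_isHermitian {V : Type*} [Fintype V] (G : SimpleGraph V) :
    (QMatrix G).IsHermitian := by
  classical
  rw [QMatrix_eq, Matrix.IsHermitian, Matrix.conjTranspose_eq_transpose_of_trivial,
    Matrix.transpose_add, Matrix.diagonal_transpose, (SimpleGraph.isSymm_adjMatrix G)]

lemma QMatrix_nonneg {V : Type*} [Fintype V] (G : SimpleGraph V) (i j : V) :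
    0 ≤ QMatrix G i j := by
  classical
  rw [QMatrix_eq, Matrix.add_apply]
  apply add_nonneg
  · rw [Matrix.diagonal_apply]
    split <;> simp
  · rw [SimpleGraph.adjMatrix_apply]
    split <;> norm_num

lemma sum_ite_adj {V : Type*} [Fintype V] (G : SimpleGraph V) [DecidableRel G.Adj]
    (x : V) (r : ℝ) :
    (∑ y : V, if G.Adj x y then r else 0) = (G.degree x : ℝ) * r := by
  classical
  rw [Finset.sum_ite, Finset.sum_const, Finset.sum_const_zero, add_zero,
    ← SimpleGraph.neighborFinset_eq_filter, SimpleGraph.degree, nsmul_eq_mul]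

lemma QMatrix_mulVec_apply {V : Type*} [Fintype V] (G : SimpleGraph V)
    [DecidableEq V] [DecidableRel G.Adj] (u : V → ℝ) (x : V) :
    (QMatrix G *ᵥ u) x = ∑ y : V, if G.Adj x y then u x + u y else 0 := by
  rw [QMatrix_eq, Matrix.add_mulVec, Pi.add_apply, Matrix.mulVec_diagonal,
    SimpleGraph.adjMatrix_mulVec_apply]
  have h1 : (∑ y ∈ G.neighborFinset x, u y) = ∑ y : V, if G.Adj x y then u y else 0 := by
    rw [SimpleGraph.neighborFinset_eq_filter, Finset.sum_filter]
  have h2 : (G.degree x : ℝ) * u x = ∑ y : V, if G.Adj x y then u x else 0 := by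
    rw [sum_ite_adj]
  rw [h1, h2, ← Finset.sum_add_distrib]
  congr 1
  ext y
  split <;> simp

lemma cycle_sum (κ : ℕ) (hκ : 3 ≤ κ) (p : Fin κ) (r : ℝ) :
    (∑ p' : Fin κ, if (cycleGraph κ).Adj p p' then r else 0) = 2 * r := by
  obtain ⟨m, rfl⟩ := Nat.exists_eq_add_of_le' hκ
  rw [sum_ite_adj, SimpleGraph.cycleGraph_degree_three_le]
  norm_num

/-- The lifted eigenvector on the cone. -/
def uVec {t q s : ℕ} (k : Fin t → ℕ) (a b c d : ℝ) :
    Option ((Σ i, Fin (k i)) ⊕ ((Σ _ : Fin q, Fin 2) ⊕ Fin s)) → ℝ := fun x =>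
  match x with
  | none => a
  | some (Sum.inl _) => b
  | some (Sum.inr (Sum.inl _)) => c
  | some (Sum.inr (Sum.inr _)) => d

@[simp] lemma uVec_none {t q s : ℕ} (k : Fin t → ℕ) (a b c d : ℝ) :
    uVec (q := q) (s := s) k a b c d none = a := rfl
@[simp] lemma uVec_inl {t q s : ℕ} (k : Fin t → ℕ) (a b c d : ℝ) (y : Σ i, Fin (k i)) :
    uVec (q := q) (s := s) k a b c d (some (Sum.inl y)) = b := rfl
@[simp] lemma uVec_inr_inl {t q s : ℕ} (k : Fin t → ℕ) (a b c d : ℝ)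
    (y : Σ _ : Fin q, Fin 2) :
    uVec (s := s) k a b c d (some (Sum.inr (Sum.inl y))) = c := rfl
@[simp] lemma uVec_inr_inr {t q s : ℕ} (k : Fin t → ℕ) (a b c d : ℝ) (y : Fin s) :
    uVec (q := q) k a b c d (some (Sum.inr (Sum.inr y))) = d := rfl

lemma coneCycles_mulVec {t q s : ℕ} (k : Fin t → ℕ) (hk : ∀ i, 3 ≤ k i)
    (a b c d θ : ℝ) (K : ℝ) (hK : K = ∑ i, (k i : ℝ))
    (r0 : θ * a = (K + 2 * q + s) * a + K * b + 2 * q * c + s * d)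
    (r1 : θ * b = a + 5 * b)
    (r2 : θ * c = a + 3 * c)
    (r3 : θ * d = a + d) :
    QMatrix (coneCycles k q s) *ᵥ uVec k a b c d = θ • uVec k a b c d := by
  classical
  funext x
  rw [QMatrix_mulVec_apply]
  rw [coneCycles]
  set u := uVec (q := q) (s := s) k a b c d with hu
  obtain (_ | (⟨i, p⟩ | (⟨j, e⟩ | v))) := x
  · -- apex
    rw [Fintype.sum_option]
    rw [if_neg (cone_adj_none_none _)]
    have hstep : ∀ w, (if (cone ((sigmaGraph fun i => cycleGraph (k i)) ⊕g
        (K2s q ⊕g (⊥ : SimpleGraph (Fin s))))).Adj none (some w) then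
          u none + u (some w) else 0) = u none + u (some w) :=
      fun w => if_pos (cone_adj_none_some _ w)
    rw [Finset.sum_congr rfl (fun w _ => hstep w), Finset.sum_add_distrib,
      Finset.sum_const, Finset.card_univ, nsmul_eq_mul, Fintype.sum_sum_type,
      Fintype.sum_sum_type]
    simp only [hu, uVec_none, uVec_inl, uVec_inr_inl, uVec_inr_inr, Finset.sum_const,
      Finset.card_univ, nsmul_eq_mul, Fintype.card_sigma, Fintype.card_fin,
      Fintype.card_sum, Pi.smul_apply, smul_eq_mul]
    have hKc : (∑ x : Fin t, ((k x : ℝ))) = K := hK.symm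
    push_cast
    rw [hKc, r0]
    ring
  · -- cycle vertex
    rw [Fintype.sum_option]
    rw [if_pos (cone_adj_some_none _ _), Fintype.sum_sum_type]
    have hz : (∑ y : (Σ _ : Fin q, Fin 2) ⊕ Fin s,
        if (cone ((sigmaGraph fun i => cycleGraph (k i)) ⊕g
          (K2s q ⊕g (⊥ : SimpleGraph (Fin s))))).Adj (some (Sum.inl ⟨i, p⟩)) (some (Sum.inr y))
        then u (some (Sum.inl ⟨i, p⟩)) + u (some (Sum.inr y)) else 0) = 0 := by
      apply Finset.sum_eq_zero
      intro y _
      rw [if_neg]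
      rw [cone_adj_some_some]
      simp
    have hc : (∑ y : Σ i, Fin (k i),
        if (cone ((sigmaGraph fun i => cycleGraph (k i)) ⊕g
          (K2s q ⊕g (⊥ : SimpleGraph (Fin s))))).Adj (some (Sum.inl ⟨i, p⟩)) (some (Sum.inl y))
        then u (some (Sum.inl ⟨i, p⟩)) + u (some (Sum.inl y)) else 0) = 2 * (b + b) := by
      rw [← Finset.univ_sigma_univ, Finset.sum_sigma]
      rw [Finset.sum_eq_single i]
      · calc (∑ p' : Fin (k i),
              if (cone ((sigmaGraph fun i => cycleGraph (k i)) ⊕g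
                (K2s q ⊕g (⊥ : SimpleGraph (Fin s))))).Adj (some (Sum.inl ⟨i, p⟩))
                  (some (Sum.inl ⟨i, p'⟩))
              then u (some (Sum.inl ⟨i, p⟩)) + u (some (Sum.inl ⟨i, p'⟩)) else 0)
            = ∑ p' : Fin (k i), if (cycleGraph (k i)).Adj p p' then b + b else 0 := by
              apply Finset.sum_congr rfl
              intro p' _
              rw [show ((cone ((sigmaGraph fun i => cycleGraph (k i)) ⊕g
                (K2s q ⊕g (⊥ : SimpleGraph (Fin s))))).Adj (some (Sum.inl ⟨i, p⟩))
                  (some (Sum.inl ⟨i, p'⟩))) = ((cycleGraph (k i)).Adj p p') from by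
                rw [cone_adj_some_some]
                simp [sigmaGraph_adj_same]]
              simp [hu]
          _ = 2 * (b + b) := cycle_sum (k i) (hk i) p (b + b)
      · intro j _ hji
        apply Finset.sum_eq_zero
        intro p' _
        rw [if_neg]
        rw [cone_adj_some_some]
        intro hadj
        have h2 : (sigmaGraph fun i => cycleGraph (k i)).Adj ⟨i, p⟩ ⟨j, p'⟩ := by
          simpa using hadj
        exact sigmaGraph_adj_ne (fun i => cycleGraph (k i)) (Ne.symm hji) p p' h2
      · intro h
        exact absurd (Finset.mem_univ i) h
    rw [hz, hc]
    simp only [hu, uVec_none, uVec_inl, Pi.smul_apply, smul_eq_mul]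
    rw [r1]; ring
  · -- K2 vertex
    rw [Fintype.sum_option]
    rw [if_pos (cone_adj_some_none _ _), Fintype.sum_sum_type, Fintype.sum_sum_type]
    have hz : (∑ y : Σ i, Fin (k i),
        if (cone ((sigmaGraph fun i => cycleGraph (k i)) ⊕g
          (K2s q ⊕g (⊥ : SimpleGraph (Fin s))))).Adj (some (Sum.inr (Sum.inl ⟨j, e⟩)))
            (some (Sum.inl y))
        then u (some (Sum.inr (Sum.inl ⟨j, e⟩))) + u (some (Sum.inl y)) else 0) = 0 := by
      apply Finset.sum_eq_zero
      intro y _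
      rw [if_neg]
      rw [cone_adj_some_some]
      simp
    have hz2 : (∑ y : Fin s,
        if (cone ((sigmaGraph fun i => cycleGraph (k i)) ⊕g
          (K2s q ⊕g (⊥ : SimpleGraph (Fin s))))).Adj (some (Sum.inr (Sum.inl ⟨j, e⟩)))
            (some (Sum.inr (Sum.inr y)))
        then u (some (Sum.inr (Sum.inl ⟨j, e⟩))) + u (some (Sum.inr (Sum.inr y))) else 0)
        = 0 := by
      apply Finset.sum_eq_zero
      intro y _
      rw [if_neg]
      rw [cone_adj_some_some]
      simp
    have hK2 : (∑ y : Σ _ : Fin q, Fin 2,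
        if (cone ((sigmaGraph fun i => cycleGraph (k i)) ⊕g
          (K2s q ⊕g (⊥ : SimpleGraph (Fin s))))).Adj (some (Sum.inr (Sum.inl ⟨j, e⟩)))
            (some (Sum.inr (Sum.inl y)))
        then u (some (Sum.inr (Sum.inl ⟨j, e⟩))) + u (some (Sum.inr (Sum.inl y))) else 0)
        = c + c := by
      rw [← Finset.univ_sigma_univ, Finset.sum_sigma]
      rw [Finset.sum_eq_single j]
      · calc (∑ e' : Fin 2,
              if (cone ((sigmaGraph fun i => cycleGraph (k i)) ⊕g
                (K2s q ⊕g (⊥ : SimpleGraph (Fin s))))).Adj (some (Sum.inr (Sum.inl ⟨j, e⟩)))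
                  (some (Sum.inr (Sum.inl ⟨j, e'⟩)))
              then u (some (Sum.inr (Sum.inl ⟨j, e⟩))) + u (some (Sum.inr (Sum.inl ⟨j, e'⟩)))
              else 0)
            = ∑ e' : Fin 2, if e ≠ e' then c + c else 0 := by
              apply Finset.sum_congr rfl
              intro e' _
              rw [show ((cone ((sigmaGraph fun i => cycleGraph (k i)) ⊕g
                (K2s q ⊕g (⊥ : SimpleGraph (Fin s))))).Adj (some (Sum.inr (Sum.inl ⟨j, e⟩)))
                  (some (Sum.inr (Sum.inl ⟨j, e'⟩)))) = (e ≠ e') from by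
                rw [cone_adj_some_some]
                simp [K2s, sigmaGraph_adj_same]]
              simp [hu]
          _ = c + c := by
              rw [Fin.sum_univ_two]
              fin_cases e <;> simp
      · intro j' _ hj'
        apply Finset.sum_eq_zero
        intro e' _
        rw [if_neg]
        rw [cone_adj_some_some]
        intro hadj
        have h2 : (sigmaGraph fun _ : Fin q => (⊤ : SimpleGraph (Fin 2))).Adj ⟨j, e⟩ ⟨j', e'⟩ := by
          simpa [K2s] using hadj
        exact sigmaGraph_adj_ne (fun _ : Fin q => (⊤ : SimpleGraph (Fin 2)))
          (Ne.symm hj') e e' h2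
      · intro h
        exact absurd (Finset.mem_univ j) h
    rw [hz, hz2, hK2]
    simp only [hu, uVec_none, uVec_inr_inl, Pi.smul_apply, smul_eq_mul]
    rw [r2]; ring
  · -- isolated vertex
    rw [Fintype.sum_option]
    rw [if_pos (cone_adj_some_none _ _)]
    have hz : (∑ y : (Σ i, Fin (k i)) ⊕ ((Σ _ : Fin q, Fin 2) ⊕ Fin s),
        if (cone ((sigmaGraph fun i => cycleGraph (k i)) ⊕g
          (K2s q ⊕g (⊥ : SimpleGraph (Fin s))))).Adj (some (Sum.inr (Sum.inr v))) (some y)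
        then u (some (Sum.inr (Sum.inr v))) + u (some y) else 0) = 0 := by
      apply Finset.sum_eq_zero
      intro y _
      rw [if_neg]
      rw [cone_adj_some_some]
      obtain (y | (y | y)) := y <;> simp
    rw [hz]
    simp only [hu, uVec_none, uVec_inr_inr, Pi.smul_apply, smul_eq_mul]
    rw [r3]; ring


noncomputable def Cmat (K qr sr : ℝ) : Matrix (Fin 4) (Fin 4) ℝ :=
  !![K + qr + sr, Real.sqrt K, Real.sqrt qr, Real.sqrt sr;
     Real.sqrt K, 5, 0, 0;
     Real.sqrt qr, 0, 3, 0;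
     Real.sqrt sr, 0, 0, 1]

lemma Cmat_isHermitian (K qr sr : ℝ) : (Cmat K qr sr).IsHermitian := by
  rw [Matrix.IsHermitian, Matrix.conjTranspose_eq_transpose_of_trivial]
  ext i j
  fin_cases i <;> fin_cases j <;>
    simp [Cmat, Matrix.transpose_apply, Matrix.vecHead, Matrix.vecTail]

lemma Cmat_nonneg {K qr sr : ℝ} (hK : 0 ≤ K) (hq : 0 ≤ qr) (hs : 0 ≤ sr) :
    ∀ i j, 0 ≤ Cmat K qr sr i j := by
  intro i j
  fin_cases i <;> fin_cases j <;>
    simp [Cmat, Matrix.vecHead, Matrix.vecTail] <;>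
    first
      | positivity
      | linarith

lemma det_Cmat (K qr sr x : ℝ) (hK : 0 ≤ K) (hq : 0 ≤ qr) (hs : 0 ≤ sr) :
    (x • (1 : Matrix (Fin 4) (Fin 4) ℝ) - Cmat K qr sr).det
      = (x - (K + qr + sr)) * (x - 5) * (x - 3) * (x - 1)
        - K * ((x - 3) * (x - 1)) - qr * ((x - 5) * (x - 1)) - sr * ((x - 5) * (x - 3)) := by
  have h1 : Real.sqrt K * Real.sqrt K = K := Real.mul_self_sqrt hK
  have h2 : Real.sqrt qr * Real.sqrt qr = qr := Real.mul_self_sqrt hq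
  have h3 : Real.sqrt sr * Real.sqrt sr = sr := Real.mul_self_sqrt hs
  have hM : x • (1 : Matrix (Fin 4) (Fin 4) ℝ) - Cmat K qr sr
      = !![x - (K + qr + sr), -Real.sqrt K, -Real.sqrt qr, -Real.sqrt sr;
           -Real.sqrt K, x - 5, 0, 0;
           -Real.sqrt qr, 0, x - 3, 0;
           -Real.sqrt sr, 0, 0, x - 1] := by
    ext i j
    fin_cases i <;> fin_cases j <;>
      simp [Cmat, Matrix.vecHead, Matrix.vecTail, Matrix.one_apply] <;> ring
  rw [hM, Matrix.det_succ_row_zero]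
  simp (config := { decide := true }) [Fin.sum_univ_succ, Matrix.det_fin_three,
    Matrix.vecHead, Matrix.vecTail, Matrix.submatrix_apply, Fin.succAbove, Fin.castSucc, Fin.castAdd, Fin.castLE]
  linear_combination (-(x-3)*(x-1)) * h1 + (-(x-5)*(x-1)) * h2 + (-(x-5)*(x-3)) * h3

lemma Cmat_maxEig (K qr sr : ℝ) (hK : 3 ≤ K) (hq : 2 ≤ qr) (hs : 1 ≤ sr) :
    ∃ w : Fin 4 → ℝ, (∀ i, 0 < w i) ∧
      Cmat K qr sr *ᵥ w = maxEig (Cmat K qr sr) (Cmat_isHermitian K qr sr) • w ∧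
      K + qr + sr ≤ maxEig (Cmat K qr sr) (Cmat_isHermitian K qr sr) := by
  set θ := maxEig (Cmat K qr sr) (Cmat_isHermitian K qr sr) with hθ
  have hθB : K + qr + sr ≤ θ := by
    have h := rayleigh_le (Cmat K qr sr) (Cmat_isHermitian K qr sr) ![1, 0, 0, 0]
    have h1 : (![1, 0, 0, 0] : Fin 4 → ℝ) ⬝ᵥ (Cmat K qr sr *ᵥ ![1, 0, 0, 0])
        = K + qr + sr := by
      simp [dotProduct, Matrix.mulVec, Fin.sum_univ_four, Cmat, Matrix.vecHead, Matrix.vecTail]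
    have h2 : (![1, 0, 0, 0] : Fin 4 → ℝ) ⬝ᵥ ![1, 0, 0, 0] = 1 := by
      simp [dotProduct, Fin.sum_univ_four]
    rw [h1, h2, mul_one] at h
    exact h
  have hθ5 : 5 < θ := by linarith
  obtain ⟨w, hwne, hwnn, hweig⟩ := exists_nonneg_eigenvector (Cmat K qr sr)
    (Cmat_isHermitian K qr sr) (Cmat_nonneg (by linarith) (by linarith) (by linarith))
  rw [← hθ] at hweig
  have e0 := congrFun hweig 0
  have e1 := congrFun hweig 1
  have e2 := congrFun hweig 2
  have e3 := congrFun hweig 3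
  simp only [Cmat, Matrix.mulVec, dotProduct, Fin.sum_univ_four, Pi.smul_apply,
    smul_eq_mul, Matrix.cons_val', Matrix.cons_val_zero, Matrix.cons_val_one,
    Matrix.head_cons, Matrix.empty_val', Matrix.cons_val_fin_one, Matrix.head_fin_const,
    Matrix.of_apply, Matrix.cons_val_two, Matrix.cons_val_three, Matrix.vecHead,
    Matrix.vecTail, Function.comp_apply, Fin.succ_zero_eq_one, Fin.succ_one_eq_two] at e0 e1 e2 e3
  have hsK : 0 < Real.sqrt K := Real.sqrt_pos.mpr (by linarith)
  have hsq : 0 < Real.sqrt qr := Real.sqrt_pos.mpr (by linarith)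
  have hss : 0 < Real.sqrt sr := Real.sqrt_pos.mpr (by linarith)
  have hw0 : 0 < w 0 := by
    rcases lt_or_eq_of_le (hwnn 0) with h | h
    · exact h
    · exfalso
      have hw1 : w 1 = 0 := by
        have hz : (θ - 5) * w 1 = 0 := by linear_combination -e1 - Real.sqrt K * h
        rcases mul_eq_zero.mp hz with h' | h'
        · linarith
        · exact h'
      have hw2 : w 2 = 0 := by
        have hz : (θ - 3) * w 2 = 0 := by linear_combination -e2 - Real.sqrt qr * h
        rcases mul_eq_zero.mp hz with h' | h'
        · linarith
        · exact h'
      have hw3 : w 3 = 0 := by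
        have hz : (θ - 1) * w 3 = 0 := by linear_combination -e3 - Real.sqrt sr * h
        rcases mul_eq_zero.mp hz with h' | h'
        · linarith
        · exact h'
      apply hwne
      funext i
      fin_cases i
      · exact h.symm
      · exact hw1
      · exact hw2
      · exact hw3
  have hw1 : 0 < w 1 := by
    have hX : (θ - 5) * w 1 = Real.sqrt K * w 0 := by linear_combination -e1
    have hpos : 0 < (θ - 5) * w 1 := by rw [hX]; exact mul_pos hsK hw0
    nlinarith [hpos, hθ5, hwnn 1]
  have hw2 : 0 < w 2 := by
    have hX : (θ - 3) * w 2 = Real.sqrt qr * w 0 := by linear_combination -e2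
    have hpos : 0 < (θ - 3) * w 2 := by rw [hX]; exact mul_pos hsq hw0
    nlinarith [hpos, hθ5, hwnn 2]
  have hw3 : 0 < w 3 := by
    have hX : (θ - 1) * w 3 = Real.sqrt sr * w 0 := by linear_combination -e3
    have hpos : 0 < (θ - 1) * w 3 := by rw [hX]; exact mul_pos hss hw0
    nlinarith [hpos, hθ5, hwnn 3]
  refine ⟨w, ?_, hweig, hθB⟩
  intro i
  fin_cases i <;> assumption

lemma div_trick (sq a w θ co : ℝ) (hsq : sq ≠ 0) (h : sq * a + co * w = θ * w) :
    θ * (w / sq) = a + co * (w / sq) := by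
  rw [← mul_div_assoc, ← h, ← mul_div_assoc, add_div, mul_comm sq a, mul_div_assoc,
    div_self hsq, mul_one]

lemma Qeig_eq_maxEig_coneCycles {t q s : ℕ} (ht : 1 ≤ t) (hq : 1 ≤ q) (hs : 1 ≤ s)
    (k : Fin t → ℕ) (hk : ∀ i, 3 ≤ k i) (K : ℝ) (hK : K = ∑ i, (k i : ℝ)) :
    Qeig (coneCycles k q s) 1
      = maxEig (Cmat K (2 * (q : ℝ)) (s : ℝ)) (Cmat_isHermitian _ _ _) := by
  classical
  have htR : (1:ℝ) ≤ t := by exact_mod_cast ht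
  have h3t : (3:ℝ) * t ≤ K := by
    rw [hK]
    calc (3:ℝ) * t = ∑ _i : Fin t, (3:ℝ) := by
          rw [Finset.sum_const, Finset.card_univ, Fintype.card_fin, nsmul_eq_mul, mul_comm]
      _ ≤ ∑ i, (k i : ℝ) := Finset.sum_le_sum fun i _ => by exact_mod_cast hk i
  have hK3 : 3 ≤ K := by nlinarith
  have hq2 : 2 ≤ 2 * (q:ℝ) := by
    have : (1:ℝ) ≤ q := by exact_mod_cast hq
    linarith
  have hs1 : 1 ≤ (s:ℝ) := by exact_mod_cast hs
  obtain ⟨w, hwpos, hweig, hθB⟩ := Cmat_maxEig K (2 * (q:ℝ)) (s:ℝ) hK3 hq2 hs1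
  set θ := maxEig (Cmat K (2 * (q : ℝ)) (s : ℝ))
    (Cmat_isHermitian K (2 * (q : ℝ)) (s : ℝ)) with hθ
  have hθ5 : 5 < θ := by linarith
  have hsK : 0 < Real.sqrt K := Real.sqrt_pos.mpr (by linarith)
  have hsq : 0 < Real.sqrt (2 * (q:ℝ)) := Real.sqrt_pos.mpr (by linarith)
  have hss : 0 < Real.sqrt (s:ℝ) := Real.sqrt_pos.mpr (by linarith)
  have e0 := congrFun hweig 0
  have e1 := congrFun hweig 1
  have e2 := congrFun hweig 2
  have e3 := congrFun hweig 3
  simp only [Cmat, Matrix.mulVec, dotProduct, Fin.sum_univ_four, Pi.smul_apply,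
    smul_eq_mul, Matrix.cons_val', Matrix.cons_val_zero, Matrix.cons_val_one,
    Matrix.head_cons, Matrix.empty_val', Matrix.cons_val_fin_one, Matrix.head_fin_const,
    Matrix.of_apply, Matrix.cons_val_two, Matrix.cons_val_three, Matrix.vecHead,
    Matrix.vecTail, Function.comp_apply, Fin.succ_zero_eq_one, Fin.succ_one_eq_two] at e0 e1 e2 e3
  set a := w 0 with ha
  set b := w 1 / Real.sqrt K with hb
  set c := w 2 / Real.sqrt (2 * (q:ℝ)) with hc
  set d := w 3 / Real.sqrt (s:ℝ) with hd
  have hKb : K * b = Real.sqrt K * w 1 := by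
    rw [hb]
    calc K * (w 1 / Real.sqrt K) = K / Real.sqrt K * w 1 := by ring
      _ = Real.sqrt K * w 1 := by rw [Real.div_sqrt]
  have hqc : 2 * (q:ℝ) * c = Real.sqrt (2 * (q:ℝ)) * w 2 := by
    rw [hc]
    calc 2 * (q:ℝ) * (w 2 / Real.sqrt (2 * (q:ℝ)))
        = 2 * (q:ℝ) / Real.sqrt (2 * (q:ℝ)) * w 2 := by ring
      _ = Real.sqrt (2 * (q:ℝ)) * w 2 := by rw [Real.div_sqrt]
  have hsd : (s:ℝ) * d = Real.sqrt (s:ℝ) * w 3 := by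
    rw [hd]
    calc (s:ℝ) * (w 3 / Real.sqrt (s:ℝ)) = (s:ℝ) / Real.sqrt (s:ℝ) * w 3 := by ring
      _ = Real.sqrt (s:ℝ) * w 3 := by rw [Real.div_sqrt]
  have r0 : θ * a = (K + 2 * (q:ℝ) + (s:ℝ)) * a + K * b + 2 * (q:ℝ) * c + (s:ℝ) * d := by
    rw [hKb, hqc, hsd]
    linarith [e0]
  have r1 : θ * b = a + 5 * b := by
    rw [hb]
    exact div_trick _ _ _ _ _ (ne_of_gt hsK) (by linarith [e1])
  have r2 : θ * c = a + 3 * c := by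
    rw [hc]
    exact div_trick _ _ _ _ _ (ne_of_gt hsq) (by linarith [e2])
  have r3 : θ * d = a + d := by
    have h1 : θ * d = a + 1 * d := by
      rw [hd]
      exact div_trick _ _ _ _ _ (ne_of_gt hss) (by linarith [e3])
    linarith [h1]
  have hQ := coneCycles_mulVec k hk a b c d θ K hK r0 r1 r2 r3
  have hapos : 0 < a := hwpos 0
  have hbpos : 0 < b := div_pos (hwpos 1) hsK
  have hcpos : 0 < c := div_pos (hwpos 2) hsq
  have hdpos : 0 < d := div_pos (hwpos 3) hss
  have upos : ∀ x, 0 < uVec (q := q) (s := s) k a b c d x := by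
    intro x
    obtain (_ | (y | (y | y))) := x
    · exact hapos
    · exact hbpos
    · exact hcpos
    · exact hdpos
  have une : uVec (q := q) (s := s) k a b c d ≠ 0 := by
    intro h
    have := congrFun h none
    simp at this
    exact absurd this (ne_of_gt hapos)
  have hermQ := QMatrix_isHermitian (coneCycles k q s)
  have hmax : θ = maxEig (QMatrix (coneCycles k q s)) hermQ :=
    maxEig_eq_of_pos_eigenvector _ hermQ (QMatrix_nonneg _) upos hQ
  have hroot : θ ∈ Qspectrum (coneCycles k q s) := by
    unfold Qspectrum
    exact (@mem_roots_charpoly_iff _ _ (Classical.decEq _) _ _ θ).mpr ⟨uVec k a b c d, une, hQ⟩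
  have hmaxall : ∀ y ∈ Qspectrum (coneCycles k q s), y ≤ θ := by
    intro y hy
    unfold Qspectrum at hy
    obtain ⟨v, hvne, hveq⟩ := (@mem_roots_charpoly_iff _ _ (Classical.decEq _) _ _ y).mp hy
    rw [hmax]
    exact le_maxEig _ hermQ hvne hveq
  show ((Qspectrum (coneCycles k q s)).sort (· ≤ ·)).reverse.getD (1-1) 0 = θ
  exact getD_reverse_sort _ hroot hmaxall

end GraphSide



/-- Lemma 3.5 / Corollary 3.6: two cones over unions of cycles, edges and isolated
vertices with the same order `n` and the same `q`, `s` have the same largest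
`Q`-eigenvalue, namely the largest root of the quartic `p_{n,q,s}`. -/
theorem Qeig_one_coneCycles_eq
    (t z q s n : ℕ) (ht : 1 ≤ t) (hz : 1 ≤ z) (hq : 1 ≤ q) (hs : 1 ≤ s)
    (k : Fin t → ℕ) (hk : ∀ i, 3 ≤ k i)
    (k' : Fin z → ℕ) (hk' : ∀ j, 3 ≤ k' j)
    (hn : n = Fintype.card (Option ((Σ i, Fin (k i)) ⊕ ((Σ _ : Fin q, Fin 2) ⊕ Fin s))))
    (hn' : n = Fintype.card (Option ((Σ j, Fin (k' j)) ⊕ ((Σ _ : Fin q, Fin 2) ⊕ Fin s)))) :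
    Qeig (coneCycles k q s) 1 = Qeig (coneCycles k' q s) 1 ∧
    quartic n q s (Qeig (coneCycles k q s) 1) = 0 ∧
    (∀ x : ℝ, quartic n q s x = 0 → x ≤ Qeig (coneCycles k q s) 1) := by
  classical
  set K : ℝ := ∑ i, (k i : ℝ) with hKdef
  have hcard1 : n = (∑ i, k i) + 2 * q + s + 1 := by
    rw [hn]
    simp [Fintype.card_option, Fintype.card_sum, Fintype.card_sigma, Fintype.card_fin]
    ring
  have hcard2 : n = (∑ j, k' j) + 2 * q + s + 1 := by
    rw [hn']
    simp [Fintype.card_option, Fintype.card_sum, Fintype.card_sigma, Fintype.card_fin]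
    ring
  have hsum_eq : (∑ i, k i) = ∑ j, k' j := by omega
  have hK' : (∑ j, (k' j : ℝ)) = K := by
    rw [hKdef]
    rw [show ((∑ j, (k' j : ℝ)) = ((∑ j, k' j : ℕ) : ℝ)) from by push_cast; rfl,
      show ((∑ i, (k i : ℝ)) = ((∑ i, k i : ℕ) : ℝ)) from by push_cast; rfl,
      hsum_eq]
  have e1 := Qeig_eq_maxEig_coneCycles ht hq hs k hk K hKdef
  have e2 := Qeig_eq_maxEig_coneCycles hz hq hs k' hk' K hK'.symm
  have htR : (1:ℝ) ≤ t := by exact_mod_cast ht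
  have h3t : (3:ℝ) * t ≤ K := by
    rw [hKdef]
    calc (3:ℝ) * t = ∑ _i : Fin t, (3:ℝ) := by
          rw [Finset.sum_const, Finset.card_univ, Fintype.card_fin, nsmul_eq_mul, mul_comm]
      _ ≤ ∑ i, (k i : ℝ) := Finset.sum_le_sum fun i _ => by exact_mod_cast hk i
  have hK3 : 3 ≤ K := by nlinarith
  have hK0 : 0 ≤ K := by linarith
  have hq0 : 0 ≤ 2 * (q:ℝ) := by positivity
  have hs0 : 0 ≤ (s:ℝ) := by positivity
  have hnK : (n:ℝ) = K + 2 * q + s + 1 := by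
    rw [hcard1, hKdef]
    push_cast
    ring
  have hquart : ∀ x : ℝ, quartic n q s x
      = (x • (1 : Matrix (Fin 4) (Fin 4) ℝ) - Cmat K (2 * (q:ℝ)) (s:ℝ)).det := by
    intro x
    rw [det_Cmat K (2 * (q:ℝ)) (s:ℝ) x hK0 hq0 hs0]
    unfold quartic
    rw [hnK]
    ring
  refine ⟨e1.trans e2.symm, ?_, ?_⟩
  · rw [e1, hquart]
    obtain ⟨v, hvne, -, hveig⟩ := exists_nonneg_eigenvector (Cmat K (2 * (q:ℝ)) (s:ℝ))
      (Cmat_isHermitian _ _ _) (Cmat_nonneg hK0 hq0 hs0)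
    exact (det_eq_zero_iff_eigen _ _).mpr ⟨v, hvne, hveig⟩
  · intro x hx
    rw [hquart] at hx
    obtain ⟨v, hvne, hveq⟩ := (det_eq_zero_iff_eigen _ _).mp hx
    rw [e1]
    exact le_maxEig _ _ hvne hveq

end Paper
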